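/- Let R = ℂ[x_1,…,x_n] and let ≥ be a local monomial order: a total order on the exponent lattice ℕ^n compatible with addition (α ≥ β implies α + γ ≥ β + γ) in which 0 is the largest element (1 is the largest monomial). For 0 ≠ f ∈ R let in_≥(f) ∈ ℕ^n be the ≥-largest exponent in the support of f, and for 0 ≠ q ∈ R let in_≽(q) ∈ ℕ^n be the ≥-smallest exponent in the support of q (the initial term with respect to the dual order ≽ opposite to ≥). Then for every ideal I ⊆ R, the lattice ℕ^n is the disjoint union of { in_≥(f) : 0 ≠ f ∈ I } and { in_≽(q) : 0 ≠ q ∈ D_0[I] }. -/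

import Mathlib

set_option maxHeartbeats 1000000
set_option synthInstance.maxHeartbeats 400000


open MvPolynomial

noncomputable section

section Stmt11AuxSec

namespace Stmt11Aux

variable {n : ℕ}

/-- total degree of an exponent vector -/
def dg (δ : Fin n →₀ ℕ) : ℕ := δ.sum fun _ e => e

lemma dg_add (a b : Fin n →₀ ℕ) : dg (a + b) = dg a + dg b :=
  Finsupp.sum_add_index' (fun _ => rfl) (fun _ _ _ => rfl)

lemma apply_le_dg (δ : Fin n →₀ ℕ) (i : Fin n) : δ i ≤ dg δ := by
  by_cases h : i ∈ δ.support
  · exact Finset.single_le_sum (fun _ _ => Nat.zero_le _) h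
  · simp [Finsupp.notMem_support_iff.mp h]

lemma one_le_dg {δ : Fin n →₀ ℕ} (h : δ ≠ 0) : 1 ≤ dg δ := by
  obtain ⟨i, hi⟩ := Finsupp.ne_iff.mp h
  have : 1 ≤ δ i := Nat.one_le_iff_ne_zero.mpr (by simpa using hi)
  exact this.trans (apply_le_dg δ i)

/-- the maximal ideal at the origin -/
def mId (n : ℕ) : Ideal (MvPolynomial (Fin n) ℂ) :=
  RingHom.ker (constantCoeff : MvPolynomial (Fin n) ℂ →+* ℂ)

lemma mem_mId {f : MvPolynomial (Fin n) ℂ} : f ∈ mId n ↔ f.coeff 0 = 0 := by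
  rw [mId, RingHom.mem_ker, MvPolynomial.constantCoeff_eq]

lemma dg_of_mem_pow : ∀ (k : ℕ) (f : MvPolynomial (Fin n) ℂ), f ∈ mId n ^ k →
    ∀ δ ∈ f.support, k ≤ dg δ := by
  intro k
  induction k with
  | zero => intro f _ δ _; exact Nat.zero_le _
  | succ k ih =>
    intro f hf
    rw [pow_succ] at hf
    refine Submodule.mul_induction_on hf ?_ ?_
    · intro a ha b hb δ hδ
      classical
      obtain ⟨y, hy, z, hz, rfl⟩ := Finset.mem_add.mp (MvPolynomial.support_mul a b hδ)
      have h1 : k ≤ dg y := ih a ha y hy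
      have h2 : 1 ≤ dg z := by
        refine one_le_dg ?_
        rintro rfl
        exact (MvPolynomial.mem_support_iff.mp hz) (mem_mId.mp hb)
      rw [dg_add]; omega
    · intro x y hx hy δ hδ
      classical
      rcases Finset.mem_union.mp (MvPolynomial.support_add hδ) with h | h
      · exact hx δ h
      · exact hy δ h

lemma monomial_mem_pow (δ : Fin n →₀ ℕ) :
    ∀ c : ℂ, MvPolynomial.monomial δ c ∈ mId n ^ dg δ := by
  induction δ using Finsupp.induction with
  | zero => intro c; simp [dg]
  | single_add a b f _ _ ih =>
    intro c
    have hdg : dg (Finsupp.single a b + f) = b + dg f := by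
      rw [dg_add]
      congr 1
      simp [dg, Finsupp.sum_single_index]
    have hXa : (MvPolynomial.X a : MvPolynomial (Fin n) ℂ) ∈ mId n := by
      rw [mem_mId]; simp
    have : (MvPolynomial.monomial (Finsupp.single a b + f) c : MvPolynomial (Fin n) ℂ)
        = MvPolynomial.X a ^ b * MvPolynomial.monomial f c := by
      rw [MvPolynomial.X_pow_eq_monomial, MvPolynomial.monomial_mul, one_mul]
    rw [this, hdg, pow_add]
    exact Ideal.mul_mem_mul (Ideal.pow_mem_pow hXa b) (ih c)

lemma mem_pow_of_dg {k : ℕ} {f : MvPolynomial (Fin n) ℂ}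
    (h : ∀ δ ∈ f.support, k ≤ dg δ) : f ∈ mId n ^ k := by
  rw [f.as_sum]
  refine Submodule.sum_mem _ fun δ hδ => ?_
  exact Ideal.pow_le_pow_right (h δ hδ) (monomial_mem_pow δ (f.coeff δ))

variable {ge : (Fin n →₀ ℕ) → (Fin n →₀ ℕ) → Prop}

/-- support property of the monomial ideal of exponents strictly below γ -/
lemma span_supp
    (hantisymm : ∀ a b, ge a b → ge b a → a = b)
    (htrans : ∀ a b c, ge a b → ge b c → ge a c)
    (hadd : ∀ a b c, ge a b → ge (a + c) (b + c))
    (htop : ∀ a, ge 0 a) (γ : Fin n →₀ ℕ)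
    {f : MvPolynomial (Fin n) ℂ}
    (hf : f ∈ Ideal.span
      ((fun δ => (MvPolynomial.monomial δ (1:ℂ) : MvPolynomial (Fin n) ℂ)) ''
      {δ | ge γ δ ∧ δ ≠ γ})) :
    ∀ ε ∈ f.support, ge γ ε ∧ ε ≠ γ := by
  classical
  refine Submodule.span_induction ?_ ?_ ?_ ?_ hf
  · rintro x ⟨δ, ⟨h1, h2⟩, rfl⟩ ε hε
    rw [MvPolynomial.support_monomial, if_neg one_ne_zero, Finset.mem_singleton] at hε
    subst hε
    exact ⟨h1, h2⟩
  · intro ε hε; simp at hε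
  · intro x y _ _ hx hy ε hε
    rcases Finset.mem_union.mp (MvPolynomial.support_add hε) with h | h
    exacts [hx ε h, hy ε h]
  · intro r x _ hx ε hε
    rw [smul_eq_mul] at hε
    obtain ⟨a, _, b, hb, rfl⟩ := Finset.mem_add.mp (MvPolynomial.support_mul r x hε)
    obtain ⟨h1, h2⟩ := hx b hb
    have hba : ge b (a + b) := by
      have := hadd 0 a b (htop a)
      rwa [zero_add] at this
    refine ⟨htrans _ _ _ h1 hba, fun hc => ?_⟩
    exact h2 (hantisymm _ _ h1 (hc ▸ hba)).symm

end Stmt11Aux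

end Stmt11AuxSec


/-- Apolarity pairing `⟨q, f⟩ = ∑ α (coeff α q) * (coeff α f)`. -/
def apair {n : ℕ} (q f : MvPolynomial (Fin n) ℂ) : ℂ :=
  ∑ α ∈ q.support, q.coeff α * f.coeff α

lemma apair_eq_sum {n : ℕ} {q : MvPolynomial (Fin n) ℂ} {s : Finset (Fin n →₀ ℕ)}
    (h : q.support ⊆ s) (f : MvPolynomial (Fin n) ℂ) :
    apair q f = ∑ α ∈ s, q.coeff α * f.coeff α :=
  Finset.sum_subset h (fun α _ hα => by
    rw [MvPolynomial.notMem_support_iff.mp hα, zero_mul])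

/-- The Macaulay dual space `D_0[I]` of an ideal at the origin. -/
def dualSpace {n : ℕ} (I : Ideal (MvPolynomial (Fin n) ℂ)) :
    Submodule ℂ (MvPolynomial (Fin n) ℂ) where
  carrier := {q | ∀ f ∈ I, apair q f = 0}
  zero_mem' := by intro f hf; simp [apair]
  add_mem' := by
    intro a b ha hb f hf
    have h : apair (a + b) f = apair a f + apair b f := by
      rw [apair_eq_sum (s := a.support ∪ b.support) MvPolynomial.support_add,
        apair_eq_sum (s := a.support ∪ b.support) Finset.subset_union_left,
        apair_eq_sum (s := a.support ∪ b.support) Finset.subset_union_right,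
        ← Finset.sum_add_distrib]
      exact Finset.sum_congr rfl fun α _ => by rw [coeff_add, add_mul]
    rw [h, ha f hf, hb f hf, add_zero]
  smul_mem' := by
    intro c q hq f hf
    have h : apair (c • q) f = c * apair q f := by
      rw [apair_eq_sum (s := q.support) MvPolynomial.support_smul, apair, Finset.mul_sum]
      exact Finset.sum_congr rfl fun α _ => by rw [coeff_smul, smul_eq_mul, mul_assoc]
    rw [h, hq f hf, mul_zero]

open scoped Classical in
/-- The contraction `g ∘ q`, realizing the action of `g` on differential functionals:
`coeff α (contract g q) = ∑ β, coeff β g * coeff (α + β) q`. -/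
def contract {n : ℕ} (g q : MvPolynomial (Fin n) ℂ) : MvPolynomial (Fin n) ℂ :=
  ∑ β ∈ g.support, ∑ α ∈ q.support,
    if β ≤ α then monomial (α - β) (g.coeff β * q.coeff α) else 0

/-- The truncated dual space `D_0^k[I]`. -/
def truncDual {n : ℕ} (k : ℕ) (I : Ideal (MvPolynomial (Fin n) ℂ)) :
    Submodule ℂ (MvPolynomial (Fin n) ℂ) where
  carrier := {q | q ∈ dualSpace I ∧ q.totalDegree ≤ k}
  zero_mem' := ⟨(dualSpace I).zero_mem, by simp⟩
  add_mem' := fun ha hb => ⟨(dualSpace I).add_mem ha.1 hb.1,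
    le_trans (MvPolynomial.totalDegree_add _ _) (max_le ha.2 hb.2)⟩
  smul_mem' := fun c q hq => ⟨(dualSpace I).smul_mem c hq.1,
    le_trans (MvPolynomial.totalDegree_smul_le c q) hq.2⟩

/-- For a local monomial order `≥` (total, compatible with addition,
with `0` the largest exponent, i.e. `1` the largest monomial), the monomial lattice `ℕⁿ`
is the disjoint union of the set of initial exponents of nonzero elements of `I` and the
set of initial exponents (w.r.t. the opposite, dual order) of nonzero elements of
`D_0[I]`. -/
theorem initial_exponents_partition (n : ℕ)
    (ge : (Fin n →₀ ℕ) → (Fin n →₀ ℕ) → Prop)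
    (htotal : ∀ a b, ge a b ∨ ge b a)
    (hantisymm : ∀ a b, ge a b → ge b a → a = b)
    (htrans : ∀ a b c, ge a b → ge b c → ge a c)
    (hadd : ∀ a b c, ge a b → ge (a + c) (b + c))
    (htop : ∀ a, ge 0 a)
    (I : Ideal (MvPolynomial (Fin n) ℂ)) :
    ∀ γ : Fin n →₀ ℕ,
      Xor'
        (∃ f ∈ I, f ≠ 0 ∧ γ ∈ f.support ∧ ∀ δ ∈ f.support, ge γ δ)
        (∃ q ∈ dualSpace I, q ≠ 0 ∧ γ ∈ q.support ∧ ∀ δ ∈ q.support, ge δ γ) := by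
  classical
  intro γ
  set Mγ : Ideal (MvPolynomial (Fin n) ℂ) :=
    Ideal.span ((fun δ => (monomial δ (1:ℂ) : MvPolynomial (Fin n) ℂ)) ''
      {δ | ge γ δ ∧ δ ≠ γ}) with hMγdef
  have hMsupp : ∀ f ∈ Mγ, ∀ ε ∈ f.support, ge γ ε ∧ ε ≠ γ :=
    fun f hf => Stmt11Aux.span_supp hantisymm htrans hadd htop γ hf
  have hrefl : ∀ a, ge a a := fun a => (htotal a a).elim id id
  have hdisj : (∃ f ∈ I, f ≠ 0 ∧ γ ∈ f.support ∧ ∀ δ ∈ f.support, ge γ δ) →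
      (∃ q ∈ dualSpace I, q ≠ 0 ∧ γ ∈ q.support ∧ ∀ δ ∈ q.support, ge δ γ) → False := by
    rintro ⟨f, hfI, -, hγf, hmax⟩ ⟨q, hqD, -, hγq, hmin⟩
    have h0 : apair q f = 0 := hqD f hfI
    have heq : apair q f = q.coeff γ * f.coeff γ := by
      rw [apair]
      refine Finset.sum_eq_single_of_mem γ hγq ?_
      intro α hα hne
      have hf0 : f.coeff α = 0 := by
        by_contra hc
        exact hne (hantisymm α γ (hmin α hα) (hmax α (MvPolynomial.mem_support_iff.mpr hc)))
      rw [hf0, mul_zero]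
    rw [heq] at h0
    exact mul_ne_zero (MvPolynomial.mem_support_iff.mp hγq)
      (MvPolynomial.mem_support_iff.mp hγf) h0
  by_cases hall : ∀ k : ℕ, (monomial γ (1:ℂ)) ∈ (I ⊔ Mγ) ⊔ (Stmt11Aux.mId n) ^ k
  · -- Krull intersection: the first alternative holds
    have hfir : ∃ f ∈ I, f ≠ 0 ∧ γ ∈ f.support ∧ ∀ δ ∈ f.support, ge γ δ := by
      set J : Ideal (MvPolynomial (Fin n) ℂ) := I ⊔ Mγ with hJ
      haveI : Module.Finite (MvPolynomial (Fin n) ℂ) (MvPolynomial (Fin n) ℂ ⧸ J) :=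
        Module.Finite.of_surjective J.mkQ (Submodule.mkQ_surjective J)
      have hmem : J.mkQ (monomial γ 1) ∈
          (⨅ i : ℕ, (Stmt11Aux.mId n) ^ i • (⊤ : Submodule (MvPolynomial (Fin n) ℂ)
            (MvPolynomial (Fin n) ℂ ⧸ J))) := by
        rw [Submodule.mem_iInf]
        intro i
        obtain ⟨a, ha, b, hb, hab⟩ := Submodule.mem_sup.mp (hall i)
        have ha0 : J.mkQ a = 0 := by
          rw [Submodule.mkQ_apply, Submodule.Quotient.mk_eq_zero]; exact ha
        have h1 : J.mkQ (monomial γ 1) = b • J.mkQ 1 := by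
          rw [← map_smul, smul_eq_mul, mul_one, ← hab, map_add, ha0, zero_add]
        rw [h1]
        exact Submodule.smul_mem_smul hb Submodule.mem_top
      obtain ⟨r, hr⟩ := (Ideal.mem_iInf_smul_pow_eq_bot_iff (Stmt11Aux.mId n) _).mp hmem
      have hJ2 : (1 - (r : MvPolynomial (Fin n) ℂ)) * monomial γ 1 ∈ J := by
        have h2 : J.mkQ ((1 - (r : MvPolynomial (Fin n) ℂ)) * monomial γ 1) = 0 := by
          rw [sub_mul, one_mul, map_sub,
            show ((r : MvPolynomial (Fin n) ℂ) * monomial γ 1)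
              = (r : MvPolynomial (Fin n) ℂ) • monomial γ 1 from rfl,
            map_smul, hr, sub_self]
        rwa [Submodule.mkQ_apply, Submodule.Quotient.mk_eq_zero] at h2
      obtain ⟨a, ha, b, hb, hab⟩ := Submodule.mem_sup.mp hJ2
      have hr0 : (r : MvPolynomial (Fin n) ℂ).coeff 0 = 0 := Stmt11Aux.mem_mId.mp r.2
      have hclead : ((1 - (r : MvPolynomial (Fin n) ℂ)) * monomial γ 1).coeff γ = 1 := by
        have h3 := MvPolynomial.coeff_mul_monomial 0 γ (1:ℂ)
          (1 - (r : MvPolynomial (Fin n) ℂ))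
        rw [zero_add] at h3
        rw [h3, mul_one, MvPolynomial.coeff_sub, MvPolynomial.coeff_zero_one, hr0, sub_zero]
      have hbγ : b.coeff γ = 0 := by
        by_contra h
        exact (hMsupp b hb γ (MvPolynomial.mem_support_iff.mpr h)).2 rfl
      have hae : a = (1 - (r : MvPolynomial (Fin n) ℂ)) * monomial γ 1 - b := by
        rw [← hab]; ring
      have haγ : a.coeff γ = 1 := by
        rw [hae, MvPolynomial.coeff_sub, hclead, hbγ, sub_zero]
      refine ⟨a, ha, ?_, ?_, ?_⟩
      · intro h; rw [h, MvPolynomial.coeff_zero] at haγ; exact zero_ne_one haγ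
      · rw [MvPolynomial.mem_support_iff, haγ]; exact one_ne_zero
      · intro δ hδ
        rw [hae] at hδ
        rcases Finset.mem_union.mp (MvPolynomial.support_sub _ _ _ hδ) with h | h
        · obtain ⟨y, hy, z, hz, rfl⟩ := Finset.mem_add.mp (MvPolynomial.support_mul _ _ h)
          rw [MvPolynomial.support_monomial, if_neg (one_ne_zero : (1:ℂ) ≠ 0),
            Finset.mem_singleton] at hz
          rw [hz]
          have h4 := hadd 0 y γ (htop y)
          rwa [zero_add] at h4
        · exact (hMsupp b hb δ h).1
    exact Or.inl ⟨hfir, fun hsec => hdisj hfir hsec⟩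
  · -- construct a dual functional: the second alternative holds
    push_neg at hall
    obtain ⟨k0, hk0⟩ := hall
    set k := max k0 (Stmt11Aux.dg γ) with hk
    set K : Ideal (MvPolynomial (Fin n) ℂ) :=
      (I ⊔ Mγ) ⊔ (Stmt11Aux.mId n) ^ (k+1) with hKdef
    have hIK : I ≤ K := le_trans le_sup_left le_sup_left
    have hMK : Mγ ≤ K := le_trans le_sup_right le_sup_left
    have hmK : (Stmt11Aux.mId n) ^ (k+1) ≤ K := le_sup_right
    have hnot : (monomial γ (1:ℂ)) ∉ K := by
      intro h
      exact hk0 ((sup_le_sup_left (Ideal.pow_le_pow_right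
        (by omega : k0 ≤ k + 1)) (I ⊔ Mγ)) h)
    set mk' := Ideal.Quotient.mkₐ ℂ K with hmk
    have hv : mk' (monomial γ 1) ≠ 0 := by
      rw [hmk, Ideal.Quotient.mkₐ_eq_mk, Ne, Ideal.Quotient.eq_zero_iff_mem]
      exact hnot
    obtain ⟨φ, hφ⟩ : ∃ φ : Module.Dual ℂ (MvPolynomial (Fin n) ℂ ⧸ K),
        φ (mk' (monomial γ 1)) ≠ 0 := by
      by_contra h
      push_neg at h
      exact hv ((Module.forall_dual_apply_eq_zero_iff ℂ _).mp h)
    set ν : Fin n →₀ ℕ := Finsupp.equivFunOnFinite.symm (fun _ => k) with hν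
    have hνa : ∀ i, ν i = k := fun i => by rw [hν]; rfl
    set S : Finset (Fin n →₀ ℕ) := Finset.Iic ν with hS
    have hmemS : ∀ δ : Fin n →₀ ℕ, δ ∈ S ↔ ∀ i, δ i ≤ k := by
      intro δ; rw [hS, Finset.mem_Iic, Finsupp.le_def]
      exact forall_congr' fun i => by rw [hνa i]
    have hγS : γ ∈ S := (hmemS γ).mpr fun i =>
      le_trans (Stmt11Aux.apply_le_dg γ i) (le_max_right _ _)
    have hnotS : ∀ δ : Fin n →₀ ℕ, δ ∉ S → k + 1 ≤ Stmt11Aux.dg δ := by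
      intro δ h
      rw [hmemS] at h; push_neg at h
      obtain ⟨i, hi⟩ := h
      exact le_trans hi (Stmt11Aux.apply_le_dg δ i)
    set q : MvPolynomial (Fin n) ℂ :=
      ∑ δ ∈ S, monomial δ (φ (mk' (monomial δ 1))) with hq
    have hcoeff : ∀ α, q.coeff α = if α ∈ S then φ (mk' (monomial α 1)) else 0 := by
      intro α
      rw [hq, MvPolynomial.coeff_sum,
        Finset.sum_congr rfl (fun δ _ => MvPolynomial.coeff_monomial α δ _)]
      exact Finset.sum_ite_eq' S α _
    have hsuppS : q.support ⊆ S := fun α hα => by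
      by_contra h
      exact (MvPolynomial.mem_support_iff.mp hα) (by rw [hcoeff α, if_neg h])
    have hγq : γ ∈ q.support := by
      rw [MvPolynomial.mem_support_iff, hcoeff γ, if_pos hγS]; exact hφ
    have hqmin : ∀ δ ∈ q.support, ge δ γ := by
      intro δ hδ
      rcases htotal δ γ with h | h
      · exact h
      by_cases hne : δ = γ
      · exact hne ▸ hrefl γ
      · exfalso
        have hmem : (monomial δ (1:ℂ)) ∈ Mγ := Ideal.subset_span ⟨δ, ⟨h, hne⟩, rfl⟩
        have hz : mk' (monomial δ (1:ℂ)) = 0 := by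
          rw [hmk, Ideal.Quotient.mkₐ_eq_mk, Ideal.Quotient.eq_zero_iff_mem]
          exact hMK hmem
        have : q.coeff δ = 0 := by
          rw [hcoeff δ, if_pos (hsuppS hδ), hz, map_zero]
        exact MvPolynomial.mem_support_iff.mp hδ this
    have hqD : q ∈ dualSpace I := by
      intro f hf
      rw [apair_eq_sum hsuppS]
      have hterm : ∀ α ∈ S, q.coeff α * f.coeff α
          = φ (f.coeff α • mk' (monomial α 1)) := by
        intro α hα
        rw [map_smul φ, smul_eq_mul, hcoeff α, if_pos hα, mul_comm]
      rw [Finset.sum_congr rfl hterm, ← map_sum φ]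
      have h5 : (∑ α ∈ S, f.coeff α • mk' (monomial α 1))
          = mk' (∑ α ∈ S, monomial α (f.coeff α)) := by
        rw [map_sum mk']
        refine Finset.sum_congr rfl fun α _ => ?_
        rw [← map_smul mk', MvPolynomial.smul_monomial, smul_eq_mul, mul_one]
      have hcg : ∀ β, (∑ α ∈ S, (monomial α (f.coeff α) : MvPolynomial (Fin n) ℂ)).coeff β
          = if β ∈ S then f.coeff β else 0 := by
        intro β
        rw [MvPolynomial.coeff_sum,
          Finset.sum_congr rfl (fun α _ => MvPolynomial.coeff_monomial β α _)]
        exact Finset.sum_ite_eq' S β _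
      have hgf : (∑ α ∈ S, (monomial α (f.coeff α) : MvPolynomial (Fin n) ℂ)) - f ∈ K := by
        refine hmK (Stmt11Aux.mem_pow_of_dg ?_)
        intro δ hδ
        refine hnotS δ fun hδS => ?_
        have : (((∑ α ∈ S, (monomial α (f.coeff α) : MvPolynomial (Fin n) ℂ)) - f).coeff δ)
            = 0 := by
          rw [MvPolynomial.coeff_sub, hcg δ, if_pos hδS, sub_self]
        exact MvPolynomial.mem_support_iff.mp hδ this
      have h6 : mk' (∑ α ∈ S, (monomial α (f.coeff α) : MvPolynomial (Fin n) ℂ)) = mk' f := by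
        rw [hmk, Ideal.Quotient.mkₐ_eq_mk, Ideal.Quotient.eq]
        exact hgf
      have h7 : mk' f = 0 := by
        rw [hmk, Ideal.Quotient.mkₐ_eq_mk, Ideal.Quotient.eq_zero_iff_mem]
        exact hIK hf
      rw [h5, h6, h7, map_zero]
    have hq0 : q ≠ 0 := by
      intro h
      rw [h] at hγq
      simp at hγq
    have hsec : ∃ q ∈ dualSpace I, q ≠ 0 ∧ γ ∈ q.support ∧ ∀ δ ∈ q.support, ge δ γ :=
      ⟨q, hqD, hq0, hγq, hqmin⟩
    exact Or.inr ⟨hsec, fun hfir => hdisj hfir hsec⟩
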